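/- arXiv:2211.07045 — 4 statements merged into one kernel-verified Lean document; each statement's English description precedes it below -/
import Mathlib

section
/- Let ξ : [0,t_f] → M solve ξ̇(t) = f_{u(t)}(ξ(t)) for an input u : [0,t_f] → L, let X_d : [0,t_f] → G be a lifted trajectory for the input u_d, and let ξ_e(t) := φ(X_d(t)⁻¹, ξ(t)), ũ := u − u_d, ξ_d(t) := φ(X_d(t), ξ̄). Then the error trajectory satisfies ξ̇_e(t) = Dφ_{ξ_e(t)}|_Id[ Ad_{X_d(t)⁻¹}( Λ(φ(X_d(t), ξ_e(t)), u_d(t)) − Λ(ξ_d(t), u_d(t)) ) ] + (Φ_{X_d(t)⁻¹} g)(ξ_e(t))[ũ(t)] for all t. -/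
open scoped Manifold

/-- Chain rule for `mfderiv`, applied to a vector, stated with a pointwise
function identity so that no rewriting under `mfderiv` is needed. -/
theorem chain_apply
    {𝕜 : Type*} [NontriviallyNormedField 𝕜]
    {E : Type*} [NormedAddCommGroup E] [NormedSpace 𝕜 E]
    {H : Type*} [TopologicalSpace H] {I : ModelWithCorners 𝕜 E H}
    {M : Type*} [TopologicalSpace M] [ChartedSpace H M]
    {E' : Type*} [NormedAddCommGroup E'] [NormedSpace 𝕜 E']
    {H' : Type*} [TopologicalSpace H'] {I' : ModelWithCorners 𝕜 E' H'}
    {M' : Type*} [TopologicalSpace M'] [ChartedSpace H' M']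
    {E'' : Type*} [NormedAddCommGroup E''] [NormedSpace 𝕜 E'']
    {H'' : Type*} [TopologicalSpace H''] {I'' : ModelWithCorners 𝕜 E'' H''}
    {M'' : Type*} [TopologicalSpace M''] [ChartedSpace H'' M'']
    (F : M → M'') (g : M' → M'') (f : M → M') (x : M) (y : M')
    (hF : ∀ z, F z = g (f z)) (hg : MDifferentiableAt I' I'' g y)
    (hf : MDifferentiableAt I I' f x) (hxy : f x = y) (v : TangentSpace I x) :
    mfderiv I I'' F x v = mfderiv I' I'' g y (mfderiv I I' f x v) := by
  subst hxy
  have hFg : F = g ∘ f := funext hF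
  rw [hFg, mfderiv_comp x hg hf]
  rfl

/-- Abstract linear-algebra assembly step. -/
theorem assemble {V : Type*} [AddCommGroup V]
    (aη aΛ aΔ F Gu Gud Bfu Gsub : V)
    (h1 : aΔ = aΛ - aη) (h2 : Bfu = F + Gu) (h3 : Gsub = Gu - Gud)
    (hkey : aΛ = F + Gud) :
    -aη + Bfu = aΔ + Gsub := by
  rw [h1, h2, h3, hkey]; abel

/-- **error dynamics on `M`, Proposition 2 of the paper.**
`M` is a smooth manifold (model `I`), `G` a Lie group (model `J`) with Lie algebra
`𝔤 = T₁G`, acting smoothly on `M` via a left action `φ`.  The input-affine system is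
`f_u(p) = f₀(p) + g(p)[u]` and `Λ` is a lift, i.e. `Dφ_p|₁[Λ(p,u)] = f_u(p)`.
Let `ξ` solve `ξ̇ = f_{u(t)}(ξ)`, let `X_d` be a lifted trajectory for the input `u_d`
(with origin `ξo`), and set `ξ_e(t) = φ(X_d(t)⁻¹, ξ(t))`, `ξ_d(t) = φ(X_d(t), ξo)`,
`ũ = u - u_d`.  Then
`ξ̇_e = Dφ_{ξ_e}|₁[Ad_{X_d⁻¹}(Λ(φ(X_d, ξ_e), u_d) - Λ(ξ_d, u_d))] + (Φ_{X_d⁻¹} g)(ξ_e)[ũ]`,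
where `Ad_X = D(Y ↦ XYX⁻¹)|₁` and `(Φ_X h)(p) = Dφ_X|_{φ(X⁻¹,p)}[h(φ(X⁻¹,p))]`. -/
theorem stmt_1
    {E : Type*} [NormedAddCommGroup E] [NormedSpace ℝ E]
    {H : Type*} [TopologicalSpace H] {I : ModelWithCorners ℝ E H}
    {M : Type*} [TopologicalSpace M] [ChartedSpace H M] [IsManifold I (⊤ : ℕ∞) M]
    {E' : Type*} [NormedAddCommGroup E'] [NormedSpace ℝ E']
    {H' : Type*} [TopologicalSpace H'] {J : ModelWithCorners ℝ E' H'}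
    {G : Type*} [TopologicalSpace G] [ChartedSpace H' G] [Group G] [LieGroup J (⊤ : ℕ∞) G]
    {L : Type*} [NormedAddCommGroup L] [NormedSpace ℝ L] [FiniteDimensional ℝ L]
    -- the left action and its properties
    (φ : G → M → M)
    (hφ_id : ∀ p : M, φ 1 p = p)
    (hφ_comp : ∀ (X Y : G) (p : M), φ X (φ Y p) = φ (X * Y) p)
    (hφ_smooth : ContMDiff (J.prod I) I (⊤ : ℕ∞) (fun q : G × M => φ q.1 q.2))
    -- the input-affine system `f_u = f₀ + g[u]` and the lift `Λ`
    (f₀ : (p : M) → TangentSpace I p)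
    (g : (p : M) → L →L[ℝ] TangentSpace I p)
    (Λ : M → L → TangentSpace J (1 : G))
    (hΛ_smooth : ContMDiff (I.prod 𝓘(ℝ, L)) 𝓘(ℝ, E') (⊤ : ℕ∞) (fun q : M × L => (id (Λ q.1 q.2) : E')))
    (hlift : ∀ (p : M) (u : L), mfderiv J I (fun Y => φ Y p) 1 (Λ p u) = f₀ p + g p u)
    -- the origin, the inputs, the system trajectory and the lifted trajectory
    (ξo : M) (u u_d : ℝ → L)
    (ξ : ℝ → M) (hξ : MDifferentiable 𝓘(ℝ, ℝ) I ξ)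
    (hξ_ode : ∀ t : ℝ, mfderiv 𝓘(ℝ, ℝ) I ξ t (1 : ℝ) = f₀ (ξ t) + g (ξ t) (u t))
    (X_d : ℝ → G) (hX_d : MDifferentiable 𝓘(ℝ, ℝ) J X_d)
    (hX_d_ode : ∀ t : ℝ, mfderiv 𝓘(ℝ, ℝ) J X_d t (1 : ℝ)
      = mfderiv J J (fun Y => Y * X_d t) 1 (Λ (φ (X_d t) ξo) (u_d t)))
    -- the error trajectory `ξ_e`, the desired trajectory `ξ_d` and the input error `ũ`
    (ξ_e : ℝ → M) (hξ_e : ∀ t, ξ_e t = φ (X_d t)⁻¹ (ξ t))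
    (ξ_d : ℝ → M) (hξ_d : ∀ t, ξ_d t = φ (X_d t) ξo)
    (ut : ℝ → L) (hut : ∀ t, ut t = u t - u_d t) :
    ∀ t : ℝ, (id (mfderiv 𝓘(ℝ, ℝ) I ξ_e t (1 : ℝ)) : E)
      = (id (mfderiv J I (fun Y => φ Y (ξ_e t)) 1
          (mfderiv J J (fun Y => (X_d t)⁻¹ * Y * ((X_d t)⁻¹)⁻¹) 1
            (Λ (φ (X_d t) (ξ_e t)) (u_d t) - Λ (ξ_d t) (u_d t)))) : E)
        + (id (mfderiv I I (fun p => φ (X_d t)⁻¹ p) (φ ((X_d t)⁻¹)⁻¹ (ξ_e t))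
            (g (φ ((X_d t)⁻¹)⁻¹ (ξ_e t)) (ut t))) : E) := by
  intro t
  -- basic differentiability facts
  have hφ1 : ∀ p : M, ContMDiff J I (⊤ : ℕ∞) (fun Y : G => φ Y p) := fun p =>
    hφ_smooth.comp (contMDiff_id.prodMk contMDiff_const)
  have hφ2 : ∀ Y : G, ContMDiff I I (⊤ : ℕ∞) (fun p : M => φ Y p) := fun Y =>
    hφ_smooth.comp (contMDiff_const.prodMk contMDiff_id)
  have hAd : ContMDiff J J (⊤ : ℕ∞) (fun Y : G => (X_d t)⁻¹ * Y * ((X_d t)⁻¹)⁻¹) :=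
    contMDiff_mul_right.comp contMDiff_mul_left
  have hXt : MDifferentiableAt 𝓘(ℝ, ℝ) J X_d t := hX_d t
  have hCt : MDifferentiableAt 𝓘(ℝ, ℝ) J (fun s => (X_d s)⁻¹) t :=
    MDifferentiableAt.comp t ((contMDiff_inv J (⊤ : ℕ∞)).mdifferentiableAt (by simp)) hXt
  have hξt : MDifferentiableAt 𝓘(ℝ, ℝ) I ξ t := hξ t
  set η : TangentSpace J (1 : G) := Λ (φ (X_d t) ξo) (u_d t) with hη
  -- point identities
  have hXe : φ (X_d t) (ξ_e t) = ξ t := by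
    rw [hξ_e, hφ_comp, mul_inv_cancel, hφ_id]
  have hXe2 : φ ((X_d t)⁻¹)⁻¹ (ξ_e t) = ξ t := by
    rw [hξ_e, hφ_comp, inv_mul_cancel, hφ_id]
  ------------------------------------------------------------------
  -- Step 1: the derivative of `s ↦ (X_d s)⁻¹` at `t`.
  ------------------------------------------------------------------
  have hpair : MDifferentiableAt 𝓘(ℝ, ℝ) (J.prod J) (fun s => (X_d s, (X_d s)⁻¹)) t :=
    hXt.prodMk hCt
  have hv : mfderiv 𝓘(ℝ, ℝ) (J.prod J) (fun s => (X_d s, (X_d s)⁻¹)) t (1:ℝ)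
      = (mfderiv 𝓘(ℝ, ℝ) J X_d t (1:ℝ), mfderiv 𝓘(ℝ, ℝ) J (fun s => (X_d s)⁻¹) t (1:ℝ)) := by
    rw [hXt.mfderiv_prod hCt]; rfl
  have hzero : (0 : TangentSpace J (1 : G))
      = mfderiv J J (fun z : G => z * (X_d t)⁻¹) (X_d t) (mfderiv 𝓘(ℝ, ℝ) J X_d t (1:ℝ))
        + mfderiv J J (fun z : G => X_d t * z) (X_d t)⁻¹
            (mfderiv 𝓘(ℝ, ℝ) J (fun s => (X_d s)⁻¹) t (1:ℝ)) := by
    have s1 : (0 : TangentSpace J (1 : G))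
        = mfderiv 𝓘(ℝ, ℝ) J (fun _ : ℝ => (1 : G)) t (1:ℝ) := by
          rw [mfderiv_const]; rfl
    have s2 : mfderiv 𝓘(ℝ, ℝ) J (fun _ : ℝ => (1 : G)) t (1:ℝ) = mfderiv (J.prod J) J (fun q : G × G => q.1 * q.2) (X_d t, (X_d t)⁻¹)
            (mfderiv 𝓘(ℝ, ℝ) (J.prod J) (fun s => (X_d s, (X_d s)⁻¹)) t (1:ℝ)) :=
          chain_apply (fun _ : ℝ => (1 : G)) (fun q : G × G => q.1 * q.2)
            (fun s => (X_d s, (X_d s)⁻¹)) t (X_d t, (X_d t)⁻¹)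
            (fun s => (mul_inv_cancel (X_d s)).symm)
            ((contMDiff_mul J (⊤ : ℕ∞)).mdifferentiableAt (by simp)) hpair rfl (1:ℝ)
    have s3 : mfderiv (J.prod J) J (fun q : G × G => q.1 * q.2) (X_d t, (X_d t)⁻¹)
            (mfderiv 𝓘(ℝ, ℝ) (J.prod J) (fun s => (X_d s, (X_d s)⁻¹)) t (1:ℝ)) = mfderiv (J.prod J) J (fun q : G × G => q.1 * q.2) (X_d t, (X_d t)⁻¹)
            (mfderiv 𝓘(ℝ, ℝ) J X_d t (1:ℝ), mfderiv 𝓘(ℝ, ℝ) J (fun s => (X_d s)⁻¹) t (1:ℝ)) :=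
          congrArg _ hv
    have s4 : mfderiv (J.prod J) J (fun q : G × G => q.1 * q.2) (X_d t, (X_d t)⁻¹)
            (mfderiv 𝓘(ℝ, ℝ) J X_d t (1:ℝ), mfderiv 𝓘(ℝ, ℝ) J (fun s => (X_d s)⁻¹) t (1:ℝ)) = mfderiv J J (fun z : G => z * (X_d t)⁻¹) (X_d t) (mfderiv 𝓘(ℝ, ℝ) J X_d t (1:ℝ))
            + mfderiv J J (fun z : G => X_d t * z) (X_d t)⁻¹
                (mfderiv 𝓘(ℝ, ℝ) J (fun s => (X_d s)⁻¹) t (1:ℝ)) :=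
          mfderiv_prod_eq_add_apply ((contMDiff_mul J (⊤ : ℕ∞)).mdifferentiableAt (by simp))
    exact s1.trans (s2.trans (s3.trans s4))
  -- right translations cancel
  have hRR : ∀ v : TangentSpace J (1 : G),
      mfderiv J J (fun z : G => z * (X_d t)⁻¹) (X_d t)
        (mfderiv J J (fun Y : G => Y * X_d t) 1 v) = v := by
    intro v
    have h := chain_apply (I := J) (I' := J) (I'' := J)
      (id : G → G) (fun z : G => z * (X_d t)⁻¹) (fun Y : G => Y * X_d t)
      1 (X_d t) (fun z => by simp [mul_assoc])
      ((contMDiff_mul_right (n := (⊤ : ℕ∞))).mdifferentiableAt (by simp))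
      ((contMDiff_mul_right (n := (⊤ : ℕ∞))).mdifferentiableAt (by simp)) (one_mul _) v
    rw [mfderiv_id] at h
    exact h.symm
  -- left translations cancel
  have hLL : ∀ v : TangentSpace J ((X_d t)⁻¹),
      mfderiv J J (fun z : G => (X_d t)⁻¹ * z) 1
        (mfderiv J J (fun z : G => X_d t * z) (X_d t)⁻¹ v) = v := by
    intro v
    have h := chain_apply (I := J) (I' := J) (I'' := J)
      (id : G → G) (fun z : G => (X_d t)⁻¹ * z) (fun z : G => X_d t * z)
      (X_d t)⁻¹ 1 (fun z => by simp)
      ((contMDiff_mul_left (n := (⊤ : ℕ∞))).mdifferentiableAt (by simp))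
      ((contMDiff_mul_left (n := (⊤ : ℕ∞))).mdifferentiableAt (by simp)) (mul_inv_cancel _) v
    rw [mfderiv_id] at h
    exact h.symm
  have h2 : mfderiv J J (fun z : G => X_d t * z) (X_d t)⁻¹
      (mfderiv 𝓘(ℝ, ℝ) J (fun s => (X_d s)⁻¹) t (1:ℝ)) = - η := by
    have h := hzero
    rw [hX_d_ode t, hRR η] at h
    exact eq_neg_of_add_eq_zero_right h.symm
  have hC1 : mfderiv 𝓘(ℝ, ℝ) J (fun s => (X_d s)⁻¹) t (1:ℝ)
      = - mfderiv J J (fun z : G => (X_d t)⁻¹ * z) 1 η := by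
    rw [← hLL (mfderiv 𝓘(ℝ, ℝ) J (fun s => (X_d s)⁻¹) t (1:ℝ)), h2, map_neg]
  ------------------------------------------------------------------
  -- Step 2: splitting the derivative of the error trajectory.
  ------------------------------------------------------------------
  have hsplit : mfderiv 𝓘(ℝ, ℝ) I ξ_e t (1:ℝ)
      = mfderiv J I (fun z : G => φ z (ξ t)) (X_d t)⁻¹
          (mfderiv 𝓘(ℝ, ℝ) J (fun s => (X_d s)⁻¹) t (1:ℝ))
        + mfderiv I I (fun z : M => φ (X_d t)⁻¹ z) (ξ t) (mfderiv 𝓘(ℝ, ℝ) I ξ t (1:ℝ)) := by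
    have hv2 : mfderiv 𝓘(ℝ, ℝ) (J.prod I) (fun s => ((X_d s)⁻¹, ξ s)) t (1:ℝ)
        = (mfderiv 𝓘(ℝ, ℝ) J (fun s => (X_d s)⁻¹) t (1:ℝ), mfderiv 𝓘(ℝ, ℝ) I ξ t (1:ℝ)) := by
      rw [hCt.mfderiv_prod hξt]; rfl
    have s1 : mfderiv 𝓘(ℝ, ℝ) I ξ_e t (1:ℝ)
        = mfderiv (J.prod I) I (fun q : G × M => φ q.1 q.2) ((X_d t)⁻¹, ξ t)
            (mfderiv 𝓘(ℝ, ℝ) (J.prod I) (fun s => ((X_d s)⁻¹, ξ s)) t (1:ℝ)) :=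
          chain_apply ξ_e (fun q : G × M => φ q.1 q.2) (fun s => ((X_d s)⁻¹, ξ s))
            t ((X_d t)⁻¹, ξ t) hξ_e (hφ_smooth.mdifferentiableAt (by simp))
            (hCt.prodMk hξt) rfl (1:ℝ)
    have s2 : mfderiv (J.prod I) I (fun q : G × M => φ q.1 q.2) ((X_d t)⁻¹, ξ t)
            (mfderiv 𝓘(ℝ, ℝ) (J.prod I) (fun s => ((X_d s)⁻¹, ξ s)) t (1:ℝ)) = mfderiv (J.prod I) I (fun q : G × M => φ q.1 q.2) ((X_d t)⁻¹, ξ t)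
            (mfderiv 𝓘(ℝ, ℝ) J (fun s => (X_d s)⁻¹) t (1:ℝ), mfderiv 𝓘(ℝ, ℝ) I ξ t (1:ℝ)) :=
          congrArg _ hv2
    have s3 : mfderiv (J.prod I) I (fun q : G × M => φ q.1 q.2) ((X_d t)⁻¹, ξ t)
            (mfderiv 𝓘(ℝ, ℝ) J (fun s => (X_d s)⁻¹) t (1:ℝ), mfderiv 𝓘(ℝ, ℝ) I ξ t (1:ℝ)) = mfderiv J I (fun z : G => φ z (ξ t)) (X_d t)⁻¹
              (mfderiv 𝓘(ℝ, ℝ) J (fun s => (X_d s)⁻¹) t (1:ℝ))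
            + mfderiv I I (fun z : M => φ (X_d t)⁻¹ z) (ξ t) (mfderiv 𝓘(ℝ, ℝ) I ξ t (1:ℝ)) :=
          mfderiv_prod_eq_add_apply (hφ_smooth.mdifferentiableAt (by simp))
    exact s1.trans (s2.trans s3)
  ------------------------------------------------------------------
  -- Step 3: the three decompositions of `Y ↦ φ ((X_d t)⁻¹ * Y) (ξ t)`.
  ------------------------------------------------------------------
  have e1 : ∀ w : TangentSpace J (1 : G),
      mfderiv J I (fun Y : G => φ ((X_d t)⁻¹ * Y) (ξ t)) 1 w
        = mfderiv J I (fun z : G => φ z (ξ t)) (X_d t)⁻¹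
            (mfderiv J J (fun z : G => (X_d t)⁻¹ * z) 1 w) := fun w =>
    chain_apply (fun Y : G => φ ((X_d t)⁻¹ * Y) (ξ t)) (fun z : G => φ z (ξ t))
      (fun z : G => (X_d t)⁻¹ * z) 1 (X_d t)⁻¹ (fun z => rfl)
      ((hφ1 (ξ t)).mdifferentiableAt (by simp))
      ((contMDiff_mul_left (n := (⊤ : ℕ∞))).mdifferentiableAt (by simp)) (mul_one _) w
  have e2 : ∀ w : TangentSpace J (1 : G),
      mfderiv J I (fun Y : G => φ ((X_d t)⁻¹ * Y) (ξ t)) 1 w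
        = mfderiv J I (fun Y : G => φ Y (ξ_e t)) 1
            (mfderiv J J (fun Y : G => (X_d t)⁻¹ * Y * ((X_d t)⁻¹)⁻¹) 1 w) := fun w =>
    chain_apply (fun Y : G => φ ((X_d t)⁻¹ * Y) (ξ t)) (fun Y : G => φ Y (ξ_e t))
      (fun Y : G => (X_d t)⁻¹ * Y * ((X_d t)⁻¹)⁻¹) 1 1
      (fun Y => by
        show φ ((X_d t)⁻¹ * Y) (ξ t) = φ ((X_d t)⁻¹ * Y * ((X_d t)⁻¹)⁻¹) (ξ_e t)
        rw [hξ_e, hφ_comp]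
        simp [mul_assoc])
      ((hφ1 (ξ_e t)).mdifferentiableAt (by simp))
      (hAd.mdifferentiableAt (by simp)) (by simp) w
  have e3 : ∀ w : TangentSpace J (1 : G),
      mfderiv J I (fun Y : G => φ ((X_d t)⁻¹ * Y) (ξ t)) 1 w
        = mfderiv I I (fun z : M => φ (X_d t)⁻¹ z) (ξ t)
            (mfderiv J I (fun Y : G => φ Y (ξ t)) 1 w) := fun w =>
    chain_apply (fun Y : G => φ ((X_d t)⁻¹ * Y) (ξ t)) (fun z : M => φ (X_d t)⁻¹ z)
      (fun Y : G => φ Y (ξ t)) 1 (ξ t) (fun Y => (hφ_comp _ _ _).symm)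
      ((hφ2 (X_d t)⁻¹).mdifferentiableAt (by simp))
      ((hφ1 (ξ t)).mdifferentiableAt (by simp)) (hφ_id _) w
  -- the key identity
  have key : mfderiv J I (fun Y : G => φ Y (ξ_e t)) 1
        (mfderiv J J (fun Y : G => (X_d t)⁻¹ * Y * ((X_d t)⁻¹)⁻¹) 1 (Λ (ξ t) (u_d t)))
      = mfderiv I I (fun z : M => φ (X_d t)⁻¹ z) (ξ t) (f₀ (ξ t))
        + mfderiv I I (fun z : M => φ (X_d t)⁻¹ z) (ξ t) (g (ξ t) (u_d t)) := by
    have h := (e2 (Λ (ξ t) (u_d t))).symm.trans (e3 (Λ (ξ t) (u_d t)))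
    rw [hlift] at h
    rw [h, map_add]
  ------------------------------------------------------------------
  -- Step 4: assembling everything.
  ------------------------------------------------------------------
  rw [hXe, hXe2, hξ_d, hut, ← hη]
  have hC1' : mfderiv J I (fun z : G => φ z (ξ t)) (X_d t)⁻¹
      (mfderiv 𝓘(ℝ, ℝ) J (fun s => (X_d s)⁻¹) t (1:ℝ))
      = - mfderiv J I (fun z : G => φ z (ξ t)) (X_d t)⁻¹
          (mfderiv J J (fun z : G => (X_d t)⁻¹ * z) 1 η) := by
    rw [hC1]; exact map_neg _ _
  rw [hsplit, hξ_ode t, hC1', ← e1 η, e2 η]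
  exact assemble (V := E)
    (mfderiv J I (fun Y : G => φ Y (ξ_e t)) 1
      (mfderiv J J (fun Y : G => (X_d t)⁻¹ * Y * ((X_d t)⁻¹)⁻¹) 1 η))
    (mfderiv J I (fun Y : G => φ Y (ξ_e t)) 1
      (mfderiv J J (fun Y : G => (X_d t)⁻¹ * Y * ((X_d t)⁻¹)⁻¹) 1 (Λ (ξ t) (u_d t))))
    (mfderiv J I (fun Y : G => φ Y (ξ_e t)) 1
      (mfderiv J J (fun Y : G => (X_d t)⁻¹ * Y * ((X_d t)⁻¹)⁻¹) 1 (Λ (ξ t) (u_d t) - η)))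
    (mfderiv I I (fun z : M => φ (X_d t)⁻¹ z) (ξ t) (f₀ (ξ t)))
    (mfderiv I I (fun z : M => φ (X_d t)⁻¹ z) (ξ t) (g (ξ t) (u t)))
    (mfderiv I I (fun z : M => φ (X_d t)⁻¹ z) (ξ t) (g (ξ t) (u_d t)))
    (mfderiv I I (fun z : M => φ (X_d t)⁻¹ z) (ξ t) (f₀ (ξ t) + g (ξ t) (u t)))
    (mfderiv I I (fun z : M => φ (X_d t)⁻¹ z) (ξ t) (g (ξ t) (u t - u_d t)))
    (by rw [map_sub]; exact map_sub _ _ _) (by rw [map_add]; rfl) (by rw [map_sub]; exact map_sub _ _ _) key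
end

section
/- Fix t and write X_d = X_d(t), u_d = u_d(t), ξ_d = φ(X_d, ξ̄). Define the drift map F : ℝ^m → ℝ^m (on a neighbourhood of 0) by F(ε) := Dχ ∘ Dφ_{χ⁻¹(ε)}|_Id [ Ad_{X_d⁻¹}( Λ(φ(X_d, χ⁻¹(ε)), u_d) − Λ(ξ_d, u_d) ) ]. Then F(0) = 0 and the derivative of F at ε = 0 equals the linear map A(t) := Dχ|_{ξ̄} ∘ Dφ_{ξ̄}|_Id ∘ Ad_{X_d⁻¹} ∘ D_ξ Λ(ξ, u_d)|_{ξ = ξ_d} ∘ Dφ_{X_d}|_{ξ̄} ∘ Dχ⁻¹|_0; moreover the input coefficient of the ε-dynamics ε̇ = F(ε) + Dχ|_{χ⁻¹(ε)}(Φ_{X_d⁻¹} g)(χ⁻¹(ε))[ũ] evaluated at ε = 0 is the linear map B(t) := Dχ|_{ξ̄} ∘ (Φ_{X_d⁻¹} g)(ξ̄). -/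
open scoped Manifold

/-- **linearised error dynamics, Proposition 3 of the paper.**
`M` is a smooth `m`-dimensional manifold with a smooth left action `φ` of a Lie group
`G`, `f_u = f₀ + g[u]` is an input-affine system with lift `Λ`, `ξo` is a fixed origin,
`X_d ∈ G`, `ξ_d = φ(X_d, ξo)`, and `χ` is a local coordinate chart of `M` centred at
`ξo` (with local inverse `χinv`).  Define the drift map
`F(ε) = Dχ ∘ Dφ_{χinv ε}|₁ [ Ad_{X_d⁻¹}(Λ(φ(X_d, χinv ε), u_d) − Λ(ξ_d, u_d)) ]`.
Then `F(0) = 0`, the derivative of `F` at `ε = 0` is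
`A = Dχ|_{ξo} ∘ Dφ_{ξo}|₁ ∘ Ad_{X_d⁻¹} ∘ D_ξΛ(ξ,u_d)|_{ξ_d} ∘ Dφ_{X_d}|_{ξo} ∘ Dχinv|₀`,
and the input coefficient `ũ ↦ Dχ|_{χinv 0} (Φ_{X_d⁻¹}g)(χinv 0)[ũ]` of the
`ε`-dynamics evaluated at `ε = 0` is `B = Dχ|_{ξo} ∘ (Φ_{X_d⁻¹}g)(ξo)`. -/
theorem stmt_3
    {E : Type*} [NormedAddCommGroup E] [NormedSpace ℝ E] [FiniteDimensional ℝ E]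
    {H : Type*} [TopologicalSpace H] {I : ModelWithCorners ℝ E H}
    {M : Type*} [TopologicalSpace M] [ChartedSpace H M] [IsManifold I (⊤ : ℕ∞) M]
    {E' : Type*} [NormedAddCommGroup E'] [NormedSpace ℝ E']
    {H' : Type*} [TopologicalSpace H'] {J : ModelWithCorners ℝ E' H'}
    {G : Type*} [TopologicalSpace G] [ChartedSpace H' G] [Group G] [LieGroup J (⊤ : ℕ∞) G]
    {L : Type*} [NormedAddCommGroup L] [NormedSpace ℝ L] [FiniteDimensional ℝ L]
    (m : ℕ) (hdim : Module.finrank ℝ E = m)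
    -- the left action
    (φ : G → M → M)
    (hφ_id : ∀ p : M, φ 1 p = p)
    (hφ_comp : ∀ (X Y : G) (p : M), φ X (φ Y p) = φ (X * Y) p)
    (hφ_smooth : ContMDiff (J.prod I) I (⊤ : ℕ∞) (fun q : G × M => φ q.1 q.2))
    -- the input-affine system and the lift
    (f₀ : (p : M) → TangentSpace I p)
    (g : (p : M) → L →L[ℝ] TangentSpace I p)
    (Λ : M → L → TangentSpace J (1 : G))
    (hΛ_smooth : ContMDiff (I.prod 𝓘(ℝ, L)) 𝓘(ℝ, E') (⊤ : ℕ∞) (fun q : M × L => (id (Λ q.1 q.2) : E')))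
    (hlift : ∀ (p : M) (u : L), mfderiv J I (fun Y => φ Y p) 1 (Λ p u) = f₀ p + g p u)
    -- a fixed time: the desired group element and input at that time
    (X_d : G) (u_d : L) (ξo : M) (ξ_d : M) (hξ_d : ξ_d = φ X_d ξo)
    -- the local chart `χ` centred at `ξo`, with local inverse `χinv`
    (χ : M → EuclideanSpace ℝ (Fin m)) (χinv : EuclideanSpace ℝ (Fin m) → M)
    (hχ0 : χ ξo = 0) (hχinv0 : χinv 0 = ξo)
    (hχ_smooth : ContMDiffAt I 𝓘(ℝ, EuclideanSpace ℝ (Fin m)) (⊤ : ℕ∞) χ ξo)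
    (hχinv_smooth : ContMDiffAt 𝓘(ℝ, EuclideanSpace ℝ (Fin m)) I (⊤ : ℕ∞) χinv 0)
    (hχ_left_inv : ∀ᶠ p in nhds ξo, χinv (χ p) = p)
    (hχ_right_inv : ∀ᶠ ε in nhds (0 : EuclideanSpace ℝ (Fin m)), χ (χinv ε) = ε)
    -- the drift map `F` of the error dynamics in local coordinates
    (F : EuclideanSpace ℝ (Fin m) → EuclideanSpace ℝ (Fin m))
    (hF : ∀ ε, F ε
      = (id (mfderiv I 𝓘(ℝ, EuclideanSpace ℝ (Fin m)) χ (χinv ε)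
          (mfderiv J I (fun Y => φ Y (χinv ε)) 1
            (mfderiv J J (fun Y => X_d⁻¹ * Y * X_d⁻¹⁻¹) 1
              (Λ (φ X_d (χinv ε)) u_d - Λ ξ_d u_d)))) : EuclideanSpace ℝ (Fin m))) :
    F 0 = 0
    ∧ HasFDerivAt F
        ((mfderiv I 𝓘(ℝ, EuclideanSpace ℝ (Fin m)) χ ξo).comp
          ((mfderiv J I (fun Y => φ Y ξo) 1).comp
            ((mfderiv J J (fun Y => X_d⁻¹ * Y * X_d⁻¹⁻¹) 1).comp
              ((mfderiv I 𝓘(ℝ, E') (fun p => (id (Λ p u_d) : E')) ξ_d).comp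
                ((mfderiv I I (fun p => φ X_d p) ξo).comp
                  (mfderiv 𝓘(ℝ, EuclideanSpace ℝ (Fin m)) I χinv 0)))))) 0
    ∧ (∀ ut : L,
        (id (mfderiv I 𝓘(ℝ, EuclideanSpace ℝ (Fin m)) χ (χinv 0)
          (mfderiv I I (fun p => φ X_d⁻¹ p) (φ X_d⁻¹⁻¹ (χinv 0))
            (g (φ X_d⁻¹⁻¹ (χinv 0)) ut))) : EuclideanSpace ℝ (Fin m))
        = (id (mfderiv I 𝓘(ℝ, EuclideanSpace ℝ (Fin m)) χ ξo
            (mfderiv I I (fun p => φ X_d⁻¹ p) (φ X_d⁻¹⁻¹ ξo)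
              (g (φ X_d⁻¹⁻¹ ξo) ut))) : EuclideanSpace ℝ (Fin m))) := by
  have hφ1 : φ 1 (χinv 0) = ξo := by rw [hχinv0, hφ_id]
  have hφXd0 : φ X_d (χinv 0) = ξ_d := by rw [hχinv0, hξ_d]
  -- `F 0 = 0`
  have hF0 : F 0 = 0 := by
    rw [hF 0, hφXd0, sub_self]
    simp only [map_zero, id_eq]
    erw [ContinuousLinearMap.map_zero, ContinuousLinearMap.map_zero]
    rfl
  refine ⟨hF0, ?_, ?_⟩
  swap
  · intro ut; rw [hχinv0]
  -- smoothness of the pieces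
  have hχinv_mdiff : MDifferentiableAt 𝓘(ℝ, EuclideanSpace ℝ (Fin m)) I χinv 0 :=
    hχinv_smooth.mdifferentiableAt (by simp)
  have hφ_part : ∀ p : M, ContMDiff J I (⊤ : ℕ∞) (fun Y => φ Y p) := fun p =>
    hφ_smooth.comp (contMDiff_id.prodMk contMDiff_const)
  have hφXd : ContMDiff I I (⊤ : ℕ∞) (fun p => φ X_d p) :=
    hφ_smooth.comp (contMDiff_const.prodMk contMDiff_id)
  have hΛu : ContMDiff I 𝓘(ℝ, E') (⊤ : ℕ∞) (fun p => (id (Λ p u_d) : E')) :=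
    hΛ_smooth.comp (contMDiff_id.prodMk contMDiff_const)
  have hχinvc : Filter.Tendsto χinv (nhds 0) (nhds ξo) := by
    have := hχinv_smooth.continuousAt
    rwa [ContinuousAt, hχinv0] at this
  -- the "vector part" `v` and its derivative `Dv` at `0`
  set v : EuclideanSpace ℝ (Fin m) → E' :=
    fun ε => (id (Λ (φ X_d (χinv ε)) u_d) : E') - (id (Λ ξ_d u_d) : E') with hv_def
  set Dv : EuclideanSpace ℝ (Fin m) →L[ℝ] E' :=
    ((mfderiv I 𝓘(ℝ, E') (fun p => (id (Λ p u_d) : E')) ξ_d).comp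
      ((mfderiv I I (fun p => φ X_d p) ξo).comp
        (mfderiv 𝓘(ℝ, EuclideanSpace ℝ (Fin m)) I χinv 0))) with hDv_def
  have hv0 : v 0 = 0 := by
    simp only [hv_def, id_eq, hφXd0, sub_self]
  have hmd1 : MDifferentiableAt I 𝓘(ℝ, E') (fun p => (id (Λ p u_d) : E')) ξ_d :=
    hΛu.mdifferentiableAt (by simp)
  have hmd2 : MDifferentiableAt I I (fun p => φ X_d p) ξo :=
    hφXd.mdifferentiableAt (by simp)
  have hmd3 : MDifferentiableAt 𝓘(ℝ, EuclideanSpace ℝ (Fin m)) I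
      ((fun p => φ X_d p) ∘ χinv) 0 :=
    MDifferentiableAt.comp 0 (by rw [hχinv0]; exact hmd2) hχinv_mdiff
  have hw_mdiff : MDifferentiableAt 𝓘(ℝ, EuclideanSpace ℝ (Fin m)) 𝓘(ℝ, E')
      ((fun p => (id (Λ p u_d) : E')) ∘ ((fun p => φ X_d p) ∘ χinv)) 0 :=
    MDifferentiableAt.comp 0
      (by rw [show ((fun p => φ X_d p) ∘ χinv) 0 = ξ_d from hφXd0]; exact hmd1) hmd3
  have hDw : mfderiv 𝓘(ℝ, EuclideanSpace ℝ (Fin m)) 𝓘(ℝ, E')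
      ((fun p => (id (Λ p u_d) : E')) ∘ ((fun p => φ X_d p) ∘ χinv)) 0 = Dv := by
    rw [mfderiv_comp_of_eq (y := ξ_d) hmd1 hmd3 hφXd0]
    rw [mfderiv_comp_of_eq (y := ξo) hmd2 hχinv_mdiff hχinv0]
    rw [hDv_def,
      mfderiv_congr_point (I := I) (I' := 𝓘(ℝ, E')) (f := fun p => (id (Λ p u_d) : E'))
        (show ((fun p => φ X_d p) ∘ χinv) 0 = ξ_d from hφXd0),
      mfderiv_congr_point (I := I) (I' := I) (f := fun p => φ X_d p) hχinv0]
    rfl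
  have hv : HasFDerivAt v Dv 0 := by
    have h1 := hw_mdiff.differentiableAt.hasFDerivAt
    rw [← mfderiv_eq_fderiv, hDw] at h1
    exact h1.sub_const _
  -- the "linear-map part" `Φ` and its differentiability at `0`
  set Ad : E' →L[ℝ] E' := mfderiv J J (fun Y => X_d⁻¹ * Y * X_d⁻¹⁻¹) 1 with hAd_def
  set Φ'' : EuclideanSpace ℝ (Fin m) → (E' →L[ℝ] EuclideanSpace ℝ (Fin m)) :=
    fun ε => mfderiv J 𝓘(ℝ, EuclideanSpace ℝ (Fin m)) (fun Y => χ (φ Y (χinv ε))) 1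
    with hΦ''_def
  have hχ_at : ContMDiffAt I 𝓘(ℝ, EuclideanSpace ℝ (Fin m)) (⊤ : ℕ∞) χ (φ 1 (χinv 0)) := by
    rw [hφ1]; exact hχ_smooth
  have huncurry : ContMDiffAt (𝓘(ℝ, EuclideanSpace ℝ (Fin m)).prod J)
      𝓘(ℝ, EuclideanSpace ℝ (Fin m)) (⊤ : ℕ∞)
      (fun q : EuclideanSpace ℝ (Fin m) × G => χ (φ q.2 (χinv q.1))) (0, 1) := by
    have hpair : ContMDiffAt (𝓘(ℝ, EuclideanSpace ℝ (Fin m)).prod J) (J.prod I) (⊤ : ℕ∞)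
        (fun q : EuclideanSpace ℝ (Fin m) × G => (q.2, χinv q.1)) (0, 1) :=
      contMDiffAt_snd.prodMk (hχinv_smooth.comp (0, 1) contMDiffAt_fst)
    have hinner : ContMDiffAt (𝓘(ℝ, EuclideanSpace ℝ (Fin m)).prod J) I (⊤ : ℕ∞)
        (fun q : EuclideanSpace ℝ (Fin m) × G => φ q.2 (χinv q.1)) (0, 1) :=
      hφ_smooth.contMDiffAt.comp (0, 1) hpair
    exact hχ_at.comp (0, 1) hinner
  have hDΦ : ContMDiffAt 𝓘(ℝ, EuclideanSpace ℝ (Fin m))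
      𝓘(ℝ, E' →L[ℝ] EuclideanSpace ℝ (Fin m)) 1
      (inTangentCoordinates J 𝓘(ℝ, EuclideanSpace ℝ (Fin m)) (fun _ => (1 : G))
        (fun ε => χ (φ 1 (χinv ε))) Φ'' 0) 0 :=
    ContMDiffAt.mfderiv (fun ε Y => χ (φ Y (χinv ε))) (fun _ => (1 : G))
      huncurry contMDiffAt_const (WithTop.coe_le_coe.mpr le_top)
  have hstrip : inTangentCoordinates J 𝓘(ℝ, EuclideanSpace ℝ (Fin m)) (fun _ => (1 : G))
      (fun ε => χ (φ 1 (χinv ε))) Φ'' 0 = Φ'' := by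
    funext ε
    rw [inTangentCoordinates_eq (I := J) (I' := 𝓘(ℝ, EuclideanSpace ℝ (Fin m)))
      (fun _ : EuclideanSpace ℝ (Fin m) => (1 : G)) (fun ε => χ (φ 1 (χinv ε))) Φ''
      (x₀ := (0 : EuclideanSpace ℝ (Fin m))) (x := ε)
      (mem_chart_source H' 1) (Set.mem_univ _)]
    ext w
    simp only [ContinuousLinearMap.comp_apply, tangentBundleCore_coordChange_model_space,
      ContinuousLinearMap.coe_id', id_eq]
    rw [(tangentBundleCore J G).coordChange_self (achart H' 1) 1
      (mem_chart_source H' 1) w]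
  rw [hstrip] at hDΦ
  have hΦ''diff : DifferentiableAt ℝ Φ'' 0 :=
    (hDΦ.mdifferentiableAt one_ne_zero).differentiableAt
  have hΦdiff : DifferentiableAt ℝ (fun ε => (Φ'' ε).comp Ad) 0 :=
    hΦ''diff.clm_comp (differentiableAt_const _)
  have happly : HasFDerivAt (fun ε => ((Φ'' ε).comp Ad) (v ε))
      (((Φ'' 0).comp Ad).comp Dv
        + (fderiv ℝ (fun ε => (Φ'' ε).comp Ad) 0).flip (v 0)) 0 :=
    hΦdiff.hasFDerivAt.clm_apply hv
  rw [hv0] at happly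
  simp only [map_zero, add_zero] at happly
  -- identify the derivative with the claimed `A`
  have hχ_mdiff0 : MDifferentiableAt I 𝓘(ℝ, EuclideanSpace ℝ (Fin m)) χ ξo :=
    hχ_smooth.mdifferentiableAt (by simp)
  have hΦ''0 : Φ'' 0 = (mfderiv I 𝓘(ℝ, EuclideanSpace ℝ (Fin m)) χ ξo).comp
      (mfderiv J I (fun Y => φ Y ξo) 1) := by
    have h1 : Φ'' 0 = mfderiv J 𝓘(ℝ, EuclideanSpace ℝ (Fin m)) (fun Y => χ (φ Y ξo)) 1 := by
      simp only [hΦ''_def]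
      exact mfderiv_congr (by funext Y; rw [hχinv0])
    rw [h1, show (fun Y => χ (φ Y ξo)) = χ ∘ (fun Y => φ Y ξo) from rfl,
      mfderiv_comp_of_eq (y := ξo) hχ_mdiff0
        ((hφ_part ξo).mdifferentiableAt (by simp)) (hφ_id ξo),
      mfderiv_congr_point (I := I) (I' := 𝓘(ℝ, EuclideanSpace ℝ (Fin m))) (f := χ) (hφ_id ξo)]
    rfl
  have hA : ((Φ'' 0).comp Ad).comp Dv
      = ((mfderiv I 𝓘(ℝ, EuclideanSpace ℝ (Fin m)) χ ξo).comp
          ((mfderiv J I (fun Y => φ Y ξo) 1).comp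
            ((mfderiv J J (fun Y => X_d⁻¹ * Y * X_d⁻¹⁻¹) 1).comp
              ((mfderiv I 𝓘(ℝ, E') (fun p => (id (Λ p u_d) : E')) ξ_d).comp
                ((mfderiv I I (fun p => φ X_d p) ξo).comp
                  (mfderiv 𝓘(ℝ, EuclideanSpace ℝ (Fin m)) I χinv 0)))))) := by
    rw [hΦ''0, hDv_def, hAd_def]
    ext w
    rfl
  rw [hA] at happly
  -- `F` agrees with the composed map near `0`
  have hχ_ev : ∀ᶠ p in nhds ξo, MDifferentiableAt I 𝓘(ℝ, EuclideanSpace ℝ (Fin m)) χ p := by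
    have h1 : ContMDiffAt I 𝓘(ℝ, EuclideanSpace ℝ (Fin m)) (1 : ℕ) χ ξo :=
      hχ_smooth.of_le (by exact_mod_cast le_top)
    exact ((contMDiffAt_iff_contMDiffAt_nhds (by simp)).mp h1).mono
      (fun p hp => hp.mdifferentiableAt one_ne_zero)
  have hev : F =ᶠ[nhds 0] fun ε => ((Φ'' ε).comp Ad) (v ε) := by
    filter_upwards [hχinvc.eventually hχ_ev] with ε hχdiff
    have hφp : MDifferentiableAt J I (fun Y => φ Y (χinv ε)) 1 :=
      (hφ_part (χinv ε)).mdifferentiableAt (by simp)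
    have hchain : Φ'' ε = (mfderiv I 𝓘(ℝ, EuclideanSpace ℝ (Fin m)) χ (χinv ε)).comp
        (mfderiv J I (fun Y => φ Y (χinv ε)) 1) := by
      have h1 : Φ'' ε
          = mfderiv J 𝓘(ℝ, EuclideanSpace ℝ (Fin m)) (fun Y => χ (φ Y (χinv ε))) 1 := by
        simp only [hΦ''_def]
        rfl
      rw [h1, show (fun Y => χ (φ Y (χinv ε))) = χ ∘ (fun Y => φ Y (χinv ε)) from rfl,
        mfderiv_comp_of_eq (y := χinv ε) hχdiff hφp (hφ_id (χinv ε)),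
        mfderiv_congr_point (I := I) (I' := 𝓘(ℝ, EuclideanSpace ℝ (Fin m))) (f := χ)
          (hφ_id (χinv ε))]
      rfl
    rw [hF ε, hchain]
    rfl
  exact happly.congr_of_eventuallyEq hev
end

section
/- Let X : [0,t_f] → G be any solution of the lifted system Ẋ(t) = D R_{X(t)}|_Id[Λ(φ(X(t), ξ̄), u(t))] for an input u : [0,t_f] → L. Then the projected curve ξ(t) := φ(X(t), ξ̄) is a trajectory of the original system, i.e. ξ̇(t) = f_{u(t)}(ξ(t)) for all t. -/
open scoped Manifold

/-- **projection of lifted trajectories.**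
Let `M` be a smooth manifold with a smooth left action `φ` of a Lie group `G`, let
`f_u = f₀ + g[u]` be an input-affine system on `M` and let `Λ` be a lift, i.e.
`Dφ_p|₁[Λ(p,u)] = f_u(p)` for all `p, u`.  Fix an origin `ξo ∈ M`.  If
`X : [0,t_f] → G` solves the lifted system `Ẋ = D R_X|₁[Λ(φ(X, ξo), u)]`, then the
projected curve `ξ(t) = φ(X(t), ξo)` is a trajectory of the original system:
`ξ̇(t) = f_{u(t)}(ξ(t))` for all `t`. -/
theorem stmt_5
    {E : Type*} [NormedAddCommGroup E] [NormedSpace ℝ E]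
    {H : Type*} [TopologicalSpace H] {I : ModelWithCorners ℝ E H}
    {M : Type*} [TopologicalSpace M] [ChartedSpace H M] [IsManifold I (⊤ : ℕ∞) M]
    {E' : Type*} [NormedAddCommGroup E'] [NormedSpace ℝ E']
    {H' : Type*} [TopologicalSpace H'] {J : ModelWithCorners ℝ E' H'}
    {G : Type*} [TopologicalSpace G] [ChartedSpace H' G] [Group G] [LieGroup J (⊤ : ℕ∞) G]
    {L : Type*} [NormedAddCommGroup L] [NormedSpace ℝ L] [FiniteDimensional ℝ L]
    (φ : G → M → M)
    (hφ_id : ∀ p : M, φ 1 p = p)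
    (hφ_comp : ∀ (X Y : G) (p : M), φ X (φ Y p) = φ (X * Y) p)
    (hφ_smooth : ContMDiff (J.prod I) I (⊤ : ℕ∞) (fun q : G × M => φ q.1 q.2))
    (f₀ : (p : M) → TangentSpace I p)
    (g : (p : M) → L →L[ℝ] TangentSpace I p)
    (Λ : M → L → TangentSpace J (1 : G))
    (hΛ_smooth : ContMDiff (I.prod 𝓘(ℝ, L)) 𝓘(ℝ, E') (⊤ : ℕ∞) (fun q : M × L => (id (Λ q.1 q.2) : E')))
    (hlift : ∀ (p : M) (u : L), mfderiv J I (fun Y => φ Y p) 1 (Λ p u) = f₀ p + g p u)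
    (ξo : M) (u : ℝ → L)
    (X : ℝ → G) (hX : MDifferentiable 𝓘(ℝ, ℝ) J X)
    (hX_ode : ∀ t : ℝ, mfderiv 𝓘(ℝ, ℝ) J X t (1 : ℝ)
      = mfderiv J J (fun Y => Y * X t) 1 (Λ (φ (X t) ξo) (u t))) :
    ∀ t : ℝ, (id (mfderiv 𝓘(ℝ, ℝ) I (fun s => φ (X s) ξo) t (1 : ℝ)) : E)
      = (id (f₀ (φ (X t) ξo) + g (φ (X t) ξo) (u t)) : E) := by
  intro t
  set a := X t with ha
  set p := φ a ξo with hp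
  have hφp : ∀ q : M, ContMDiff J I (⊤ : ℕ∞) (fun Y : G => φ Y q) := fun q =>
    hφ_smooth.comp (contMDiff_id.prodMk contMDiff_const)
  have hfun : (fun s => φ (X s) ξo) = (fun Y : G => φ Y p) ∘ ((fun Y : G => Y * a⁻¹) ∘ X) := by
    funext s
    simp only [Function.comp, hp, hφ_comp, inv_mul_cancel_right]
  have hmul : ∀ b c : G, MDifferentiableAt J J (fun Y : G => Y * b) c := fun b c =>
    (contMDiff_mul_right (G := G) (n := ((⊤ : ℕ∞) : WithTop ℕ∞)) (a := b)).mdifferentiableAt (by simp)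
  have hh : MDifferentiableAt 𝓘(ℝ, ℝ) J ((fun Y : G => Y * a⁻¹) ∘ X) t :=
    (hmul a⁻¹ a).comp t (hX t)
  have hht : ((fun Y : G => Y * a⁻¹) ∘ X) t = 1 := by simp [Function.comp, ha]
  have h1 : mfderiv 𝓘(ℝ, ℝ) I (fun s => φ (X s) ξo) t
      = (mfderiv J I (fun Y : G => φ Y p) 1).comp
        ((mfderiv J J (fun Y : G => Y * a⁻¹) a).comp (mfderiv 𝓘(ℝ, ℝ) J X t)) := by
    rw [hfun]
    rw [mfderiv_comp t (by rw [hht]; exact ((hφp p).mdifferentiableAt (by simp))) hh]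
    rw [hht]
    congr 1
    exact mfderiv_comp t (hmul a⁻¹ a) (hX t)
  have h2 : (mfderiv J J (fun Y : G => Y * a⁻¹) a)
      ((mfderiv J J (fun Y : G => Y * a) 1) (Λ p (u t))) = Λ p (u t) := by
    have hc := mfderiv_comp_apply_of_eq (I' := J) (x := (1 : G)) (y := a)
      (g := fun Y : G => Y * a⁻¹) (f := fun Y : G => Y * a)
      (hmul a⁻¹ a) (hmul a 1) (one_mul a) (Λ p (u t))
    have hid : ((fun Y : G => Y * a⁻¹) ∘ (fun Y : G => Y * a)) = id := by
      funext Y; simp [Function.comp]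
    rw [hid, mfderiv_id] at hc
    exact hc.symm
  have : mfderiv 𝓘(ℝ, ℝ) I (fun s => φ (X s) ξo) t (1 : ℝ)
      = mfderiv J I (fun Y : G => φ Y p) 1 (Λ p (u t)) := by
    rw [h1]
    show (mfderiv J I (fun Y : G => φ Y p) 1)
        ((mfderiv J J (fun Y : G => Y * a⁻¹) a) ((mfderiv 𝓘(ℝ, ℝ) J X t) (1 : ℝ))) = _
    rw [hX_ode t, ← ha, ← hp, h2]
  exact congrArg id (this.trans (hlift p (u t)))
end

section
/- Let ξ_d : [0,t_f] → M solve ξ̇_d = f_{u_d(t)}(ξ_d) with ξ_d(0) = ξ_d⁰, and let X_d : [0,t_f] → G solve the lifted system Ẋ_d(t) = D R_{X_d(t)}|_Id[Λ(φ(X_d(t), ξ̄), u_d(t))] with initial condition X_d(0) = X_d⁰ satisfying φ(X_d⁰, ξ̄) = ξ_d⁰. Assume solutions of the time-dependent ODE ξ̇ = f_{u_d(t)}(ξ) on M are unique for each initial condition. Then φ(X_d(t), ξ̄) = ξ_d(t) for all t ∈ [0,t_f]. -/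
open scoped Manifold

/-- **lifted trajectories project onto the desired trajectory.**
Let `M` be a smooth manifold with a smooth left action `φ` of a Lie group `G`, let
`f_u = f₀ + g[u]` be an input-affine system on `M`, let `Λ` be a lift and fix an
origin `ξo ∈ M`.  Let `ξ_d : [0,t_f] → M` solve `ξ̇_d = f_{u_d(t)}(ξ_d)` with
`ξ_d(0) = ξ_d⁰`, and let `X_d : [0,t_f] → G` solve the lifted system
`Ẋ_d = D R_{X_d}|₁[Λ(φ(X_d, ξo), u_d)]` with `φ(X_d(0), ξo) = ξ_d⁰`.
Assume solutions of the time-dependent ODE `ξ̇ = f_{u_d(t)}(ξ)` on `M` are unique for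
each initial condition.  Then `φ(X_d(t), ξo) = ξ_d(t)` for all `t ∈ [0, t_f]`. -/
theorem stmt_6
    {E : Type*} [NormedAddCommGroup E] [NormedSpace ℝ E]
    {H : Type*} [TopologicalSpace H] {I : ModelWithCorners ℝ E H}
    {M : Type*} [TopologicalSpace M] [ChartedSpace H M] [IsManifold I (⊤ : ℕ∞) M]
    {E' : Type*} [NormedAddCommGroup E'] [NormedSpace ℝ E']
    {H' : Type*} [TopologicalSpace H'] {J : ModelWithCorners ℝ E' H'}
    {G : Type*} [TopologicalSpace G] [ChartedSpace H' G] [Group G] [LieGroup J (⊤ : ℕ∞) G]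
    {L : Type*} [NormedAddCommGroup L] [NormedSpace ℝ L] [FiniteDimensional ℝ L]
    (φ : G → M → M)
    (hφ_id : ∀ p : M, φ 1 p = p)
    (hφ_comp : ∀ (X Y : G) (p : M), φ X (φ Y p) = φ (X * Y) p)
    (hφ_smooth : ContMDiff (J.prod I) I (⊤ : ℕ∞) (fun q : G × M => φ q.1 q.2))
    (f₀ : (p : M) → TangentSpace I p)
    (g : (p : M) → L →L[ℝ] TangentSpace I p)
    (Λ : M → L → TangentSpace J (1 : G))
    (hΛ_smooth : ContMDiff (I.prod 𝓘(ℝ, L)) 𝓘(ℝ, E') (⊤ : ℕ∞) (fun q : M × L => (id (Λ q.1 q.2) : E')))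
    (hlift : ∀ (p : M) (u : L), mfderiv J I (fun Y => φ Y p) 1 (Λ p u) = f₀ p + g p u)
    (ξo : M) (t_f : ℝ) (u_d : ℝ → L)
    -- the desired trajectory
    (ξ_d : ℝ → M) (ξ_d0 : M) (hξ_d0 : ξ_d 0 = ξ_d0)
    (hξ_d_diff : ∀ t ∈ Set.Icc (0 : ℝ) t_f, MDifferentiableAt 𝓘(ℝ, ℝ) I ξ_d t)
    (hξ_d_ode : ∀ t ∈ Set.Icc (0 : ℝ) t_f,
      (id (mfderiv 𝓘(ℝ, ℝ) I ξ_d t (1 : ℝ)) : E) = (id (f₀ (ξ_d t) + g (ξ_d t) (u_d t)) : E))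
    -- the lifted trajectory, with matching initial condition
    (X_d : ℝ → G) (X_d0 : G) (hX_d0 : X_d 0 = X_d0)
    (hX_d_init : φ X_d0 ξo = ξ_d0)
    (hX_d_diff : ∀ t ∈ Set.Icc (0 : ℝ) t_f, MDifferentiableAt 𝓘(ℝ, ℝ) J X_d t)
    (hX_d_ode : ∀ t ∈ Set.Icc (0 : ℝ) t_f, mfderiv 𝓘(ℝ, ℝ) J X_d t (1 : ℝ)
      = mfderiv J J (fun Y => Y * X_d t) 1 (Λ (φ (X_d t) ξo) (u_d t)))
    -- uniqueness of solutions of the time-dependent ODE `ξ̇ = f_{u_d(t)}(ξ)` on `M`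
    (huniq : ∀ γ₁ γ₂ : ℝ → M,
      (∀ t ∈ Set.Icc (0 : ℝ) t_f, MDifferentiableAt 𝓘(ℝ, ℝ) I γ₁ t) →
      (∀ t ∈ Set.Icc (0 : ℝ) t_f,
        (id (mfderiv 𝓘(ℝ, ℝ) I γ₁ t (1 : ℝ)) : E) = (id (f₀ (γ₁ t) + g (γ₁ t) (u_d t)) : E)) →
      (∀ t ∈ Set.Icc (0 : ℝ) t_f, MDifferentiableAt 𝓘(ℝ, ℝ) I γ₂ t) →
      (∀ t ∈ Set.Icc (0 : ℝ) t_f,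
        (id (mfderiv 𝓘(ℝ, ℝ) I γ₂ t (1 : ℝ)) : E) = (id (f₀ (γ₂ t) + g (γ₂ t) (u_d t)) : E)) →
      γ₁ 0 = γ₂ 0 → ∀ t ∈ Set.Icc (0 : ℝ) t_f, γ₁ t = γ₂ t) :
    ∀ t ∈ Set.Icc (0 : ℝ) t_f, φ (X_d t) ξo = ξ_d t := by

  have hψ : ∀ p : M, ContMDiff J I (⊤ : ℕ∞) (fun Y : G => φ Y p) := fun p =>
    hφ_smooth.comp (contMDiff_id.prodMk contMDiff_const)
  intro t ht
  refine huniq (fun s => φ (X_d s) ξo) ξ_d ?_ ?_ hξ_d_diff hξ_d_ode ?_ t ht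
  · intro s hs
    exact ((hψ ξo).mdifferentiableAt (by simp)).comp s (hX_d_diff s hs)
  · intro s hs
    have hc : mfderiv 𝓘(ℝ, ℝ) I (fun s => φ (X_d s) ξo) s
        = (mfderiv J I (fun Y => φ Y ξo) (X_d s)).comp (mfderiv 𝓘(ℝ, ℝ) J X_d s) :=
      mfderiv_comp s ((hψ ξo).mdifferentiableAt (by simp)) (hX_d_diff s hs)
    have hR : MDifferentiableAt J J (fun Y : G => Y * X_d s) 1 :=
      (contMDiff_mul_right (n := ((⊤ : ℕ∞) : WithTop ℕ∞))).mdifferentiableAt (by simp)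
    have hc2 : mfderiv J I ((fun Y => φ Y ξo) ∘ (fun Y : G => Y * X_d s)) 1
        = (mfderiv J I (fun Y => φ Y ξo) (X_d s)).comp
          (mfderiv J J (fun Y : G => Y * X_d s) 1) := by
      have h := mfderiv_comp (I' := J) 1 ((hψ ξo).mdifferentiableAt (by simp)) hR
      rw [show (1 : G) * X_d s = X_d s from one_mul _] at h
      exact h
    have hfun : ((fun Y => φ Y ξo) ∘ (fun Y : G => Y * X_d s))
        = fun Y : G => φ Y (φ (X_d s) ξo) := by
      funext Y
      simp [Function.comp, hφ_comp]
    have := hlift (φ (X_d s) ξo) (u_d s)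
    rw [← hfun, hc2] at this
    rw [hc]
    have hode := hX_d_ode s hs
    show ((mfderiv J I (fun Y => φ Y ξo) (X_d s)).comp (mfderiv 𝓘(ℝ, ℝ) J X_d s) (1:ℝ) : E)
      = _
    exact (congrArg (mfderiv J I (fun Y => φ Y ξo) (X_d s)) hode).trans this
  · show φ (X_d 0) ξo = ξ_d 0
    rw [hX_d0, hX_d_init, hξ_d0]
end
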